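/- For all integers a, b and every natural number n ≥ 2, the identity (n+2)·M^{a,b}_n = b(2n+1)·M^{a,b}_{n−1} − (b² − 4a²)(n−1)·M^{a,b}_{n−2} holds in ℤ. (In particular, for a = b = 1: (n+2)·M_n = (2n+1)·M_{n−1} + (3n−3)·M_{n−2}.) -/
import Mathlib

open Polynomial

/-- The generalized central trinomial coefficient `T^{a,b}_n`:
the coefficient of `X^n` in `(a + bX + aX^2)^n`. -/
noncomputable def genTrinomial (a b : ℤ) (n : ℕ) : ℤ :=
  ((C a + C b * X + C a * X ^ 2) ^ n).coeff n

/-- The generalized Motzkin number `M^{a,b}_n`: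
the coefficient of `X^n` in `(a + bX + aX^2)^n * (1 - X^2)`. -/
noncomputable def genMotzkin (a b : ℤ) (n : ℕ) : ℤ :=
  (((C a + C b * X + C a * X ^ 2) ^ n) * (1 - X ^ 2)).coeff n

theorem stmt3 (a b : ℤ) (n : ℕ) (hn : 2 ≤ n) :
    ((n : ℤ) + 2) * genMotzkin a b n =
      b * (2 * (n : ℤ) + 1) * genMotzkin a b (n - 1)
        - (b ^ 2 - 4 * a ^ 2) * ((n : ℤ) - 1) * genMotzkin a b (n - 2) := by
  obtain ⟨m, rfl⟩ : ∃ m, n = m + 2 := ⟨n - 2, by omega⟩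
  set P : ℤ[X] := C a + C b * X + C a * X ^ 2 with hP
  set N : ℤ := (m : ℤ) + 2 with hN
  set S : ℤ[X] := C (-(a * (N + 2))) + C (-(2 * b)) * X + C (2 * a * (N - 1)) * X ^ 2
      + C (-(a * N)) * X ^ 4 with hS
  set Q : ℤ[X] := P ^ (m + 1) * S with hQ
  -- the telescoping identity
  have hA : C N * (C (N + 2) * (P ^ (m + 2) * (1 - X ^ 2))
        - C (b * (2 * N + 1)) * (X * (P ^ (m + 1) * (1 - X ^ 2)))
        + C ((b ^ 2 - 4 * a ^ 2) * (N - 1)) * (X ^ 2 * (P ^ m * (1 - X ^ 2))))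
      = X * derivative Q - C N * Q := by
    rw [hQ, hS, hP, hN]
    simp only [derivative_mul, derivative_pow, derivative_add, derivative_C, derivative_X,
      derivative_X_pow, derivative_one, derivative_ofNat, derivative_natCast, Nat.add_sub_cancel, map_mul, map_add, map_sub, map_neg, map_ofNat,
      map_one, map_pow, map_natCast, Nat.cast_add, Nat.cast_one, Nat.cast_ofNat]
    push_cast
    ring
  -- coefficient of X^(m+2) of RHS is zero
  have hB : (X * derivative Q - C N * Q).coeff (m + 2) = 0 := by
    rw [coeff_sub, coeff_C_mul]
    have h1 : (X * derivative Q).coeff (m + 2) = (derivative Q).coeff (m + 1) :=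
      coeff_X_mul (derivative Q) (m + 1)
    rw [h1, coeff_derivative, hN]
    push_cast
    ring
  have hC := congrArg (fun p => p.coeff (m + 2)) hA
  simp only [hB] at hC
  have h2 : (X * (P ^ (m + 1) * (1 - X ^ 2))).coeff (m + 2)
      = (P ^ (m + 1) * (1 - X ^ 2)).coeff (m + 1) := coeff_X_mul _ (m + 1)
  have h3 : (X ^ 2 * (P ^ m * (1 - X ^ 2))).coeff (m + 2)
      = (P ^ m * (1 - X ^ 2)).coeff m := coeff_X_pow_mul _ 2 m
  simp only [coeff_C_mul, coeff_add, coeff_sub, h2, h3] at hC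
  have hM : ∀ k : ℕ, (P ^ k * (1 - X ^ 2)).coeff k = genMotzkin a b k := fun k => rfl
  rw [hM, hM, hM] at hC
  have hNe : N ≠ 0 := by rw [hN]; positivity
  have : (↑(m + 2) : ℤ) = N := by rw [hN]; push_cast; ring
  rw [this]
  show (N + 2) * genMotzkin a b (m + 2) = b * (2 * N + 1) * genMotzkin a b (m + 1)
    - (b ^ 2 - 4 * a ^ 2) * (N - 1) * genMotzkin a b m
  have := mul_left_cancel₀ hNe (hC.trans (by ring : (0:ℤ) = N * 0))
  linarith [this]
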